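/- Every F_{q^m}-linear isometry of F_{q^m}^n for the sum-rank metric with equal sublengths N = n_1 = ... = n_ℓ is of the form φ(c^(1),...,c^(ℓ)) = (β_1 c^(σ(1)) A_1, ..., β_ℓ c^(σ(ℓ)) A_ℓ) for some nonzero scalars β_i ∈ F_{q^m}^*, invertible matrices A_i ∈ F_q^{N×N}, and a permutation σ of {1,...,ℓ}; conversely every such map is a linear sum-rank isometry. -/

import Mathlib

open Matrix Finset

noncomputable def rkWt {K L : Type*} [Field K] [Field L] [Algebra K L] {m : ℕ}
    (B : Module.Basis (Fin m) K L) {p : ℕ} (v : Fin p → L) : ℕ :=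
  (Matrix.of (fun a (j : Fin p) => B.repr (v j) a) : Matrix (Fin m) (Fin p) K).rank

section aux
variable {K L : Type*} [Field K] [Field L] [Algebra K L] {m : ℕ} (B : Module.Basis (Fin m) K L)

lemma rkWt_eq_finrank {p : ℕ} (v : Fin p → L) :
    rkWt B v = Module.finrank K (Submodule.span K (Set.range v)) := by
  classical
  rw [rkWt, Matrix.rank_eq_finrank_span_cols]
  have h : Set.range (Matrix.of (fun a (j : Fin p) => B.repr (v j) a) :
      Matrix (Fin m) (Fin p) K).col = B.equivFun '' (Set.range v) := by
    ext x
    simp only [Set.mem_range, Set.mem_image]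
    constructor
    · rintro ⟨j, rfl⟩
      exact ⟨v j, ⟨j, rfl⟩, rfl⟩
    · rintro ⟨y, ⟨j, rfl⟩, rfl⟩
      exact ⟨j, rfl⟩
  rw [h, Submodule.span_image_linearEquiv]
  exact LinearEquiv.finrank_map_eq B.equivFun _

lemma rkWt_eq_zero_iff {p : ℕ} (v : Fin p → L) :
    rkWt B v = 0 ↔ v = 0 := by
  haveI : Module.Finite K L := Module.Finite.of_basis B
  rw [rkWt_eq_finrank, Submodule.finrank_eq_zero, Submodule.span_eq_bot]
  constructor
  · intro h
    funext t
    exact h _ ⟨t, rfl⟩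
  · rintro rfl x ⟨t, rfl⟩
    rfl

lemma rkWt_le_one_iff {p : ℕ} (v : Fin p → L) :
    rkWt B v ≤ 1 ↔ ∃ (γ : L) (a : Fin p → K), v = fun t => algebraMap K L (a t) * γ := by
  haveI : Module.Finite K L := Module.Finite.of_basis B
  rw [rkWt_eq_finrank]
  constructor
  · intro h
    have h' : Module.rank K (Submodule.span K (Set.range v)) ≤ 1 := by
      rw [← Module.finrank_eq_rank]
      exact_mod_cast h
    obtain ⟨γ, hγ⟩ := (rank_submodule_le_one_iff' _).mp h'
    refine ⟨γ, fun t => ?_, ?_⟩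
    · exact (Submodule.mem_span_singleton.mp
        (hγ (Submodule.subset_span ⟨t, rfl⟩))).choose
    · funext t
      have := (Submodule.mem_span_singleton.mp
        (hγ (Submodule.subset_span ⟨t, rfl⟩))).choose_spec
      rw [← this, Algebra.smul_def]
  · rintro ⟨γ, a, rfl⟩
    calc Module.finrank K (Submodule.span K (Set.range fun t => algebraMap K L (a t) * γ))
        ≤ Module.finrank K (Submodule.span K ({γ} : Set L)) := by
          apply Submodule.finrank_mono
          rw [Submodule.span_le]
          rintro x ⟨t, rfl⟩
          simp only []
          rw [← Algebra.smul_def]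
          exact Submodule.smul_mem _ _ (Submodule.mem_span_singleton_self γ)
      _ ≤ 1 := by
          simpa using finrank_span_le_card ({γ} : Set L)


lemma rkWt_smul {p : ℕ} (β : L) (hβ : β ≠ 0) (v : Fin p → L) :
    rkWt B (fun t => β * v t) = rkWt B v := by
  haveI : Module.Finite K L := Module.Finite.of_basis B
  rw [rkWt_eq_finrank, rkWt_eq_finrank]
  let e : L ≃ₗ[K] L := LinearEquiv.ofLinear
    (Algebra.lmul K L β) (Algebra.lmul K L β⁻¹)
    (by ext x
        show β * (β⁻¹ * x) = x
        rw [← mul_assoc, mul_inv_cancel₀ hβ, one_mul])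
    (by ext x
        show β⁻¹ * (β * x) = x
        rw [← mul_assoc, inv_mul_cancel₀ hβ, one_mul])
  have he : ∀ x, e x = β * x := fun x => rfl
  have hr : Set.range (fun t => β * v t) = e '' Set.range v := by
    ext x
    constructor
    · rintro ⟨t, rfl⟩; exact ⟨v t, ⟨t, rfl⟩, (he _)⟩
    · rintro ⟨y, ⟨t, rfl⟩, rfl⟩; exact ⟨t, (he _).symm⟩
  rw [hr, Submodule.span_image_linearEquiv]
  exact LinearEquiv.finrank_map_eq e _


lemma rkWt_le_of_mem_span {p r : ℕ} (v : Fin p → L) (w : Fin r → L)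
    (h : ∀ t, w t ∈ Submodule.span K (Set.range v)) : rkWt B w ≤ rkWt B v := by
  haveI : Module.Finite K L := Module.Finite.of_basis B
  rw [rkWt_eq_finrank, rkWt_eq_finrank]
  apply Submodule.finrank_mono
  rw [Submodule.span_le]
  rintro x ⟨t, rfl⟩
  exact h t

lemma rkWt_vecMul_le {p r : ℕ} (M : Matrix (Fin p) (Fin r) K) (v : Fin p → L) :
    rkWt B (Matrix.vecMul v (M.map (algebraMap K L))) ≤ rkWt B v := by
  apply rkWt_le_of_mem_span
  intro t
  have : Matrix.vecMul v (M.map (algebraMap K L)) t = ∑ k, (M k t) • v k := by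
    simp [Matrix.vecMul, dotProduct, Algebra.smul_def, mul_comm]
  rw [this]
  exact Submodule.sum_mem _ fun k _ =>
    Submodule.smul_mem _ _ (Submodule.subset_span ⟨k, rfl⟩)

lemma rkWt_vecMul_unit {p : ℕ} (M : Matrix (Fin p) (Fin p) K) (hM : IsUnit M)
    (v : Fin p → L) :
    rkWt B (Matrix.vecMul v (M.map (algebraMap K L))) = rkWt B v := by
  refine le_antisymm (rkWt_vecMul_le B M v) ?_
  have h1 : M * M⁻¹ = 1 := Matrix.mul_nonsing_inv M ((Matrix.isUnit_iff_isUnit_det M).mp hM)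
  have h2 : Matrix.vecMul (Matrix.vecMul v (M.map (algebraMap K L))) (M⁻¹.map (algebraMap K L)) = v := by
    rw [Matrix.vecMul_vecMul, ← Matrix.map_mul, h1]
    simp
  conv_lhs => rw [← h2]
  exact rkWt_vecMul_le B M⁻¹ _


lemma rkWt_smul' {p : ℕ} (β : L) (hβ : β ≠ 0) (v : Fin p → L) :
    rkWt B (β • v) = rkWt B v := by
  have h : (β • v) = fun t => β * v t := funext fun t => by simp [smul_eq_mul]
  rw [h, rkWt_smul B β hβ]

end aux

/-- Sum-rank weight with equal sublengths `N` and `ℓ` shots. -/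
noncomputable def srWt {K L : Type*} [Field K] [Field L] [Algebra K L] {m ℓ N : ℕ}
    (B : Module.Basis (Fin m) K L) (c : Fin ℓ → Fin N → L) : ℕ :=
  ∑ i, rkWt B (c i)

section aux2
variable {K L : Type*} [Field K] [Field L] [Algebra K L] {m ℓ N : ℕ} (B : Module.Basis (Fin m) K L)

lemma srWt_single (i : Fin ℓ) (v : Fin N → L) :
    srWt B (Pi.single i v) = rkWt B v := by
  classical
  rw [srWt]
  rw [Finset.sum_eq_single i]
  · rw [Pi.single_eq_same]
  · intro j _ hj
    rw [Pi.single_eq_of_ne hj, rkWt_eq_zero_iff]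
  · intro h
    exact absurd (Finset.mem_univ i) h

end aux2

section hard
variable {K L : Type*} [Field K] [Field L] [Algebra K L] {m ℓ N : ℕ}

theorem hard_dir (B : Module.Basis (Fin m) K L)
    (φ : (Fin ℓ → Fin N → L) →ₗ[L] (Fin ℓ → Fin N → L))
    (hφ : ∀ c, srWt B (φ c) = srWt B c) (hN : 0 < N) :
    ∃ (β : Fin ℓ → Lˣ) (A : Fin ℓ → Matrix (Fin N) (Fin N) K)
      (σ : Equiv.Perm (Fin ℓ)),
      (∀ i, IsUnit (A i)) ∧
      ∀ c i, φ c i = (β i : L) • Matrix.vecMul (c (σ i)) ((A i).map (algebraMap K L)) := by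
  classical
  set j0 : Fin N := ⟨0, hN⟩ with hj0
  -- zero weight
  have hz : srWt B (0 : Fin ℓ → Fin N → L) = 0 :=
    Finset.sum_eq_zero fun i _ => by rw [Pi.zero_apply, rkWt_eq_zero_iff]
  have hker : ∀ c, φ c = 0 → c = 0 := by
    intro c hc
    have h1 : srWt B c = 0 := by rw [← hφ c, hc, hz]
    funext k
    have h2 := (Finset.sum_eq_zero_iff).mp h1 k (Finset.mem_univ k)
    exact (rkWt_eq_zero_iff B (c k)).mp h2
  have hinj : Function.Injective φ := by
    intro a b hab
    have h0 : φ (a - b) = 0 := by rw [map_sub, hab, sub_self]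
    exact sub_eq_zero.mp (hker _ h0)
  -- the K-rational vectors
  set KV : (Fin N → K) → (Fin N → L) := fun x t => algebraMap K L (x t) with hKVdef
  have hKV_rk : ∀ x, rkWt B (KV x) ≤ 1 := fun x =>
    (rkWt_le_one_iff B _).mpr ⟨1, x, funext fun t => (mul_one _).symm⟩
  have hKV_ne : ∀ x : Fin N → K, x ≠ 0 → KV x ≠ 0 := by
    intro x hx h
    apply hx
    funext t
    have h2 : algebraMap K L (x t) = algebraMap K L 0 := by
      simpa [hKVdef] using congr_fun h t
    exact (algebraMap K L).injective h2
  have hw1 : ∀ (v : Fin N → L), v ≠ 0 → rkWt B v ≤ 1 → rkWt B v = 1 := fun v hv h =>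
    le_antisymm h (Nat.one_le_iff_ne_zero.mpr fun h0 => hv ((rkWt_eq_zero_iff B v).mp h0))
  have hrk_ne : ∀ (v : Fin N → L), rkWt B v = 1 → v ≠ 0 := by
    intro v h1 h0
    rw [h0, (rkWt_eq_zero_iff B 0).mpr rfl] at h1
    exact one_ne_zero h1.symm
  -- weight concentrated on one block
  have hsingle : ∀ (d : Fin ℓ → Fin N → L) (s : Fin ℓ), (∀ k, k ≠ s → d k = 0) →
      srWt B d = rkWt B (d s) := by
    intro d s hd
    have hds : d = Pi.single s (d s) := funext fun k => by
      by_cases hk : k = s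
      · subst hk; rw [Pi.single_eq_same]
      · rw [Pi.single_eq_of_ne hk]; exact hd k hk
    calc srWt B d = srWt B (Pi.single s (d s)) := by rw [← hds]
      _ = rkWt B (d s) := srWt_single B s (d s)
  have hsupp : ∀ d : Fin ℓ → Fin N → L, srWt B d = 1 →
      ∃ s, (∀ k, k ≠ s → d k = 0) ∧ rkWt B (d s) = 1 := by
    intro d hd
    have hex : ∃ s, rkWt B (d s) ≠ 0 := by
      by_contra h
      push_neg at h
      have : srWt B d = 0 := Finset.sum_eq_zero fun k _ => h k
      omega
    obtain ⟨s, hs⟩ := hex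
    have hle : rkWt B (d s) ≤ 1 :=
      (Finset.single_le_sum (f := fun k => rkWt B (d k))
        (fun k _ => Nat.zero_le _) (Finset.mem_univ s)).trans (le_of_eq hd)
    have h1 : rkWt B (d s) = 1 := le_antisymm hle (Nat.one_le_iff_ne_zero.mpr hs)
    refine ⟨s, fun k hk => ?_, h1⟩
    have hd' : ∑ k, rkWt B (d k) = 1 := hd
    have hsum : rkWt B (d s) + ∑ k ∈ Finset.univ.erase s, rkWt B (d k) = ∑ k, rkWt B (d k) :=
      Finset.add_sum_erase _ (fun k => rkWt B (d k)) (Finset.mem_univ s)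
    have hzero : ∑ k ∈ Finset.univ.erase s, rkWt B (d k) = 0 := by omega
    have := Finset.sum_eq_zero_iff.mp hzero k (Finset.mem_erase.mpr ⟨hk, Finset.mem_univ k⟩)
    exact (rkWt_eq_zero_iff B _).mp this
  have hwE : ∀ (i : Fin ℓ) (x : Fin N → K), x ≠ 0 → srWt B (Pi.single i (KV x)) = 1 := by
    intro i x hx
    rw [srWt_single]
    exact hw1 _ (hKV_ne x hx) (hKV_rk x)
  have hpair : ∀ (d : Fin ℓ → Fin N → L) (s s' : Fin ℓ), s ≠ s' → d s ≠ 0 → d s' ≠ 0 →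
      2 ≤ srWt B d := by
    intro d s s' hss hs hs'
    have h1 : 1 ≤ rkWt B (d s) :=
      Nat.one_le_iff_ne_zero.2 fun h => hs ((rkWt_eq_zero_iff B _).mp h)
    have h2 : 1 ≤ rkWt B (d s') :=
      Nat.one_le_iff_ne_zero.2 fun h => hs' ((rkWt_eq_zero_iff B _).mp h)
    calc 2 ≤ rkWt B (d s) + rkWt B (d s') := by omega
      _ = ∑ k ∈ ({s, s'} : Finset (Fin ℓ)), rkWt B (d k) :=
          (Finset.sum_pair (f := fun k => rkWt B (d k)) hss).symm
      _ ≤ ∑ k, rkWt B (d k) := Finset.sum_le_sum_of_subset (Finset.subset_univ _)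
      _ = srWt B d := rfl
  have hsum2 : ∀ (f : Fin ℓ → ℕ) (i i' : Fin ℓ), i ≠ i' →
      (∀ k, k ≠ i → k ≠ i' → f k = 0) → ∑ k, f k = f i + f i' := by
    intro f i i' hii hf
    rw [← Finset.sum_pair hii]
    refine (Finset.sum_subset (Finset.subset_univ _) fun x _ hx => ?_).symm
    simp only [Finset.mem_insert, Finset.mem_singleton, not_or] at hx
    exact hf x hx.1 hx.2
  -- each block maps into a single block
  have main1 : ∀ i : Fin ℓ, ∃ s : Fin ℓ, ∀ v : Fin N → L, rkWt B v ≤ 1 →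
      ∀ k, k ≠ s → φ (Pi.single i v) k = 0 := by
    intro i
    have hx0 : (Pi.single j0 1 : Fin N → K) ≠ 0 := by
      intro h
      have := congr_fun h j0
      rw [Pi.single_eq_same] at this
      exact one_ne_zero this
    obtain ⟨s, hs0, hs1⟩ := hsupp (φ (Pi.single i (KV (Pi.single j0 1))))
      (by rw [hφ]; exact hwE i _ hx0)
    refine ⟨s, fun v hv k hk => ?_⟩
    by_cases hv0 : v = 0
    · subst hv0
      rw [Pi.single_zero, map_zero]
      rfl
    obtain ⟨γ, a, hva⟩ := (rkWt_le_one_iff B v).mp hv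
    have hγ : γ ≠ 0 := by
      rintro rfl
      apply hv0
      rw [hva]
      funext t
      simp
    obtain ⟨s', hs'0, hs'1⟩ := hsupp (φ (Pi.single i v))
      (by rw [hφ, srWt_single]; exact hw1 v hv0 hv)
    by_cases hss : s' = s
    · subst hss; exact hs'0 k hk
    exfalso
    have hin : KV (Pi.single j0 1) + γ⁻¹ • v = KV (Pi.single j0 1 + a) := by
      funext t
      rw [hva]
      simp only [hKVdef, Pi.add_apply, Pi.smul_apply, smul_eq_mul, map_add]
      field_simp
    set w : Fin ℓ → Fin N → L :=
      (Pi.single i (KV (Pi.single j0 1)) : Fin ℓ → Fin N → L)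
        + γ⁻¹ • (Pi.single i v : Fin ℓ → Fin N → L) with hwdef
    have hcomb : w = (Pi.single i (KV (Pi.single j0 1 + a)) : Fin ℓ → Fin N → L) := by
      rw [hwdef, ← Pi.single_smul, ← Pi.single_add, hin]
    have hle : srWt B (φ w) ≤ 1 := by
      rw [hφ, hcomb, srWt_single]
      exact hKV_rk _
    have hge : 2 ≤ srWt B (φ w) := by
      rw [hwdef, map_add, LinearMap.map_smul]
      refine hpair _ s s' (fun h => hss h.symm) ?_ ?_
      · have h1 : φ (Pi.single i v) s = 0 := hs'0 s (fun h => hss h.symm)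
        have h2 : φ (Pi.single i (KV (Pi.single j0 1))) s ≠ 0 := hrk_ne _ hs1
        simpa [h1] using h2
      · have h1 : φ (Pi.single i (KV (Pi.single j0 1))) s' = 0 := hs0 s' hss
        have h2 : φ (Pi.single i v) s' ≠ 0 := hrk_ne _ hs'1
        have h3 : γ⁻¹ ≠ 0 := inv_ne_zero hγ
        simp only [Pi.add_apply, Pi.smul_apply, h1, zero_add]
        exact smul_ne_zero h3 h2
    omega
  choose σ' hσ' using main1
  have hx0 : ∀ j : Fin N, (Pi.single j 1 : Fin N → K) ≠ 0 := by
    intro j h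
    have := congr_fun h j
    rw [Pi.single_eq_same] at this
    exact one_ne_zero this
  -- the image of a weight-one element of block i at position σ' i has rank 1
  have hrk1 : ∀ (i : Fin ℓ) (x : Fin N → K), x ≠ 0 →
      rkWt B (φ (Pi.single i (KV x)) (σ' i)) = 1 := by
    intro i x hx
    rw [← hsingle _ _ (hσ' i _ (hKV_rk x)), hφ]
    exact hwE i x hx
  have hσinj : Function.Injective σ' := by
    intro i i' hii
    by_contra hne
    obtain ⟨γ, a, hform⟩ := (rkWt_le_one_iff B _).mp (le_of_eq (hrk1 i (Pi.single j0 1) (hx0 j0)))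
    obtain ⟨γ', a', hform'⟩ := (rkWt_le_one_iff B _).mp (le_of_eq (hrk1 i' (Pi.single j0 1) (hx0 j0)))
    have hγ : γ ≠ 0 := by
      rintro rfl
      apply hrk_ne _ (hrk1 i (Pi.single j0 1) (hx0 j0))
      rw [hform]
      funext t; simp
    have hγ' : γ' ≠ 0 := by
      rintro rfl
      apply hrk_ne _ (hrk1 i' (Pi.single j0 1) (hx0 j0))
      rw [hform']
      funext t; simp
    set lam : L := γ * γ'⁻¹ with hlam
    have hlam0 : lam ≠ 0 := mul_ne_zero hγ (inv_ne_zero hγ')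
    set u : Fin ℓ → Fin N → L := Pi.single i (KV (Pi.single j0 1)) with hu
    set u' : Fin ℓ → Fin N → L := Pi.single i' (KV (Pi.single j0 1)) with hu'
    -- the input has weight 2
    have hw2 : srWt B (u + lam • u') = 2 := by
      have hii' : i ≠ i' := hne
      have hcomp : ∀ k, k ≠ i → k ≠ i' → (u + lam • u') k = 0 := by
        intro k hk hk'
        simp only [hu, hu', Pi.add_apply, Pi.smul_apply,
          Pi.single_eq_of_ne hk, Pi.single_eq_of_ne hk', smul_zero, add_zero]
      have hcomp' : ∀ k, k ≠ i → k ≠ i' → rkWt B ((u + lam • u') k) = 0 := by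
        intro k hk hk'
        rw [hcomp k hk hk']
        exact (rkWt_eq_zero_iff B 0).mpr rfl
      have hsum : ∑ k, rkWt B ((u + lam • u') k)
          = rkWt B ((u + lam • u') i) + rkWt B ((u + lam • u') i') :=
        hsum2 (fun k => rkWt B ((u + lam • u') k)) i i' hii' hcomp'
      have hui : (u + lam • u') i = KV (Pi.single j0 1) := by
        simp only [hu, hu', Pi.add_apply, Pi.smul_apply, Pi.single_eq_same,
          Pi.single_eq_of_ne hii', smul_zero, add_zero]
      have hui' : (u + lam • u') i' = lam • KV (Pi.single j0 1) := by
        simp only [hu, hu', Pi.add_apply, Pi.smul_apply, Pi.single_eq_same,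
          Pi.single_eq_of_ne (Ne.symm hii'), zero_add]
      have h1 : rkWt B ((u + lam • u') i) = 1 := by
        rw [hui]; exact hw1 _ (hKV_ne _ (hx0 j0)) (hKV_rk _)
      have h2 : rkWt B ((u + lam • u') i') = 1 := by
        rw [hui', rkWt_smul' B lam hlam0]
        exact hw1 _ (hKV_ne _ (hx0 j0)) (hKV_rk _)
      show ∑ k, rkWt B ((u + lam • u') k) = 2
      rw [hsum, h1, h2]
    -- the output has weight ≤ 1
    have hwle : srWt B (φ (u + lam • u')) ≤ 1 := by
      have hsupset : ∀ k, k ≠ σ' i → φ (u + lam • u') k = 0 := by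
        intro k hk
        have e1 : φ u k = 0 := hσ' i _ (hKV_rk _) k hk
        have e2 : φ u' k = 0 := hσ' i' _ (hKV_rk _) k (by rw [← hii]; exact hk)
        rw [map_add, LinearMap.map_smul]
        simp only [Pi.add_apply, Pi.smul_apply, e1, e2, smul_zero, add_zero]
      rw [hsingle _ _ hsupset]
      have hval : φ (u + lam • u') (σ' i) =
          fun t => algebraMap K L (a t + a' t) * γ := by
        rw [map_add, LinearMap.map_smul]
        have e' : φ u' (σ' i) = fun t => algebraMap K L (a' t) * γ' := by
          rw [hii]; exact hform'
        funext t
        simp only [Pi.add_apply, Pi.smul_apply]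
        rw [hform, e']
        simp only [smul_eq_mul, map_add, hlam]
        field_simp
      rw [hval]
      exact (rkWt_le_one_iff B _).mpr ⟨γ, _, rfl⟩
    rw [hφ] at hwle
    omega
  have hσbij : Function.Bijective σ' := Finite.injective_iff_bijective.mp hσinj
  -- decomposition of K-rational single blocks
  have hKVdec : ∀ x : Fin N → K, KV x = ∑ j, algebraMap K L (x j) • KV (Pi.single j 1) := by
    intro x
    funext t
    simp only [Finset.sum_apply, Pi.smul_apply, smul_eq_mul, hKVdef, Pi.single_apply,
      apply_ite (algebraMap K L), _root_.map_one, _root_.map_zero, mul_ite, mul_one, mul_zero]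
    rw [Finset.sum_ite_eq]
    simp
  have hSdec : ∀ (i : Fin ℓ) (x : Fin N → K),
      (Pi.single i (KV x) : Fin ℓ → Fin N → L)
        = ∑ j, algebraMap K L (x j) • (Pi.single i (KV (Pi.single j 1)) : Fin ℓ → Fin N → L) := by
    intro i x
    have hS : ∀ w : Fin N → L, (Pi.single i w : Fin ℓ → Fin N → L)
        = LinearMap.single L (fun _ : Fin ℓ => Fin N → L) i w := fun w => rfl
    rw [hS, hKVdec x, map_sum]
    refine Finset.sum_congr rfl fun j _ => ?_
    rw [LinearMap.map_smul, hS]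
  -- per-block structure
  have main2 : ∀ i : Fin ℓ, ∃ (β : L) (A : Matrix (Fin N) (Fin N) K), β ≠ 0 ∧ IsUnit A ∧
      ∀ j : Fin N, φ (Pi.single i (KV (Pi.single j 1)))
        = Pi.single (σ' i) (fun t => β * algebraMap K L (A j t)) := by
    intro i
    have hgj : ∀ j : Fin N, ∃ (γ : L) (a : Fin N → K), γ ≠ 0 ∧ a ≠ 0 ∧
        φ (Pi.single i (KV (Pi.single j 1)))
          = Pi.single (σ' i) (fun t => algebraMap K L (a t) * γ) := by
      intro j
      obtain ⟨γ, a, hform⟩ := (rkWt_le_one_iff B _).mp (le_of_eq (hrk1 i (Pi.single j 1) (hx0 j)))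
      have hne : φ (Pi.single i (KV (Pi.single j 1))) (σ' i) ≠ 0 :=
        hrk_ne _ (hrk1 i (Pi.single j 1) (hx0 j))
      have hγ : γ ≠ 0 := by
        rintro rfl
        apply hne
        rw [hform]
        funext t; simp
      have ha : a ≠ 0 := by
        rintro rfl
        apply hne
        rw [hform]
        funext t; simp
      refine ⟨γ, a, hγ, ha, funext fun k => ?_⟩
      by_cases hk : k = σ' i
      · subst hk
        rw [Pi.single_eq_same]
        exact hform
      · rw [Pi.single_eq_of_ne hk]
        exact hσ' i _ (hKV_rk _) k hk
    choose γf af hγf haf hgform using hgj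
    -- rows are pairwise non-proportional
    have hap : ∀ j j' : Fin N, j ≠ j' → ∀ c : K, af j' ≠ c • af j := by
      intro j j' hjj c hc
      have hc0 : c ≠ 0 := by
        rintro rfl
        apply haf j'
        rw [hc]; simp
      set μ : L := algebraMap K L c * γf j' * (γf j)⁻¹ with hμ
      have hμg : (fun t => algebraMap K L (af j' t) * γf j')
          = μ • (fun t => algebraMap K L (af j t) * γf j) := by
        funext t
        have := congr_fun hc t
        simp only [Pi.smul_apply, smul_eq_mul] at this ⊢
        rw [this, hμ]
        simp only [_root_.map_mul]
        field_simp
        rw [eq_div_iff (hγf j)]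
      have h0 : φ ((Pi.single i (KV (Pi.single j' 1)) : Fin ℓ → Fin N → L)
          - μ • (Pi.single i (KV (Pi.single j 1)) : Fin ℓ → Fin N → L)) = 0 := by
        rw [map_sub, LinearMap.map_smul, hgform j', hgform j, hμg, ← Pi.single_smul]
        rw [sub_self]
      have h1 := hker _ h0
      have h2 := congr_fun (congr_fun h1 i) j'
      simp only [Pi.sub_apply, Pi.smul_apply, Pi.single_eq_same, Pi.zero_apply,
        hKVdef, Pi.single_eq_of_ne (Ne.symm hjj), _root_.map_zero, _root_.map_one,
        smul_eq_mul, mul_zero, sub_zero] at h2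
      exact one_ne_zero h2
    -- the scalars are pairwise K-proportional
    have hgam : ∀ j : Fin N, ∃ c : K, γf j = algebraMap K L c * γf j0 := by
      intro j
      by_cases hj : j = j0
      · exact ⟨1, by rw [hj]; simp⟩
      by_contra hcon
      push_neg at hcon
      have hind : ∀ x y : K, x • γf j0 + y • γf j = 0 → x = 0 ∧ y = 0 := by
        intro x y hxy
        by_cases hy : y = 0
        · subst hy
          rw [zero_smul, add_zero, smul_eq_zero] at hxy
          exact ⟨hxy.resolve_right (hγf j0), rfl⟩
        exfalso
        apply hcon (-(y⁻¹ * x))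
        have h1 : y • γf j = -(x • γf j0) := by
          rw [eq_neg_iff_add_eq_zero, add_comm]
          exact hxy
        have h2 : γf j = (-(y⁻¹ * x)) • γf j0 := by
          calc γf j = y⁻¹ • (y • γf j) := by rw [smul_smul, inv_mul_cancel₀ hy, one_smul]
            _ = y⁻¹ • (-(x • γf j0)) := by rw [h1]
            _ = (-(y⁻¹ * x)) • γf j0 := by rw [smul_neg, smul_smul, neg_smul]
        rw [h2, Algebra.smul_def]
      -- the sum of the two unit vectors
      set x2 : Fin N → K := Pi.single j0 1 + Pi.single j 1 with hx2def
      have hj0j : j0 ≠ j := fun h => hj h.symm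
      have hx2 : x2 ≠ 0 := by
        intro h
        have h2 := congr_fun h j0
        rw [hx2def] at h2
        simp only [Pi.add_apply, Pi.single_eq_same, Pi.single_eq_of_ne hj0j,
          add_zero, Pi.zero_apply] at h2
        exact one_ne_zero h2
      have hEadd : (Pi.single i (KV x2) : Fin ℓ → Fin N → L)
          = Pi.single i (KV (Pi.single j0 1)) + Pi.single i (KV (Pi.single j 1)) := by
        have hin : KV x2 = KV (Pi.single j0 1) + KV (Pi.single j 1) := by
          funext t
          simp only [hKVdef, hx2def, Pi.add_apply, _root_.map_add]
        rw [hin, Pi.single_add]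
      have hh : φ (Pi.single i (KV x2)) (σ' i)
          = fun t => algebraMap K L (af j0 t) * γf j0 + algebraMap K L (af j t) * γf j := by
        rw [hEadd, map_add]
        funext t
        simp only [Pi.add_apply]
        rw [hgform j0, hgform j]
        simp only [Pi.single_eq_same]
      obtain ⟨δ, b, hδb⟩ := (rkWt_le_one_iff B _).mp (le_of_eq (hrk1 i x2 hx2))
      have hhne : φ (Pi.single i (KV x2)) (σ' i) ≠ 0 := hrk_ne _ (hrk1 i x2 hx2)
      have hbex : ∃ t0, b t0 ≠ 0 := by
        by_contra hb
        push_neg at hb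
        apply hhne
        rw [hδb]
        funext t
        rw [hb t]
        simp
      obtain ⟨t0, ht0⟩ := hbex
      have hrel : ∀ t, af j0 t * b t0 = af j0 t0 * b t ∧ af j t * b t0 = af j t0 * b t := by
        intro t
        have f1 : algebraMap K L (af j0 t) * γf j0 + algebraMap K L (af j t) * γf j
            = algebraMap K L (b t) * δ := (congr_fun hh t).symm.trans (congr_fun hδb t)
        have f2 : algebraMap K L (af j0 t0) * γf j0 + algebraMap K L (af j t0) * γf j
            = algebraMap K L (b t0) * δ := (congr_fun hh t0).symm.trans (congr_fun hδb t0)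
        have e3 : (algebraMap K L (af j0 t) * γf j0 + algebraMap K L (af j t) * γf j)
              * algebraMap K L (b t0)
            = (algebraMap K L (af j0 t0) * γf j0 + algebraMap K L (af j t0) * γf j)
              * algebraMap K L (b t) := by
          rw [f1, f2]
          ring
        have e4 : (af j0 t * b t0 - af j0 t0 * b t) • γf j0
            + (af j t * b t0 - af j t0 * b t) • γf j = 0 := by
          simp only [Algebra.smul_def, _root_.map_sub, _root_.map_mul]
          linear_combination e3
        obtain ⟨p, q⟩ := hind _ _ e4
        exact ⟨sub_eq_zero.mp p, sub_eq_zero.mp q⟩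
      by_cases ht00 : af j0 t0 = 0
      · apply haf j0
        funext t
        have h1 := (hrel t).1
        rw [ht00, zero_mul] at h1
        rcases mul_eq_zero.mp h1 with h | h
        · exact h
        · exact absurd h ht0
      · apply hap j0 j hj0j (af j t0 / af j0 t0)
        have key : ∀ t, af j t * af j0 t0 = af j t0 * af j0 t := by
          intro t
          have h1 := (hrel t).1
          have h2 := (hrel t).2
          apply mul_right_cancel₀ ht0
          calc af j t * af j0 t0 * b t0 = (af j t * b t0) * af j0 t0 := by ring
            _ = (af j t0 * b t) * af j0 t0 := by rw [h2]
            _ = (af j0 t0 * b t) * af j t0 := by ring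
            _ = (af j0 t * b t0) * af j t0 := by rw [← h1]
            _ = af j t0 * af j0 t * b t0 := by ring
        funext t
        simp only [Pi.smul_apply, smul_eq_mul]
        rw [div_mul_eq_mul_div, eq_div_iff ht00]
        rw [key t]
    -- assemble the per-block matrix
    choose cf hcf using hgam
    have hcf0 : ∀ j, cf j ≠ 0 := by
      intro j h
      apply hγf j
      rw [hcf j, h]
      simp
    set A : Matrix (Fin N) (Fin N) K := Matrix.of (fun j t => cf j * af j t) with hA
    have hformA : ∀ j : Fin N, φ (Pi.single i (KV (Pi.single j 1)))
        = Pi.single (σ' i) (fun t => γf j0 * algebraMap K L (A j t)) := by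
      intro j
      rw [hgform j]
      have hin : (fun t => algebraMap K L (af j t) * γf j)
          = fun t => γf j0 * algebraMap K L (A j t) := by
        funext t
        rw [hA]
        simp only [Matrix.of_apply, _root_.map_mul]
        rw [hcf j]
        ring
      rw [hin]
    -- φ applied to arbitrary K-rational single blocks
    have hφKV : ∀ x : Fin N → K, φ (Pi.single i (KV x))
        = Pi.single (σ' i) (fun t => γf j0 * algebraMap K L (Matrix.vecMul x A t)) := by
      intro x
      rw [hSdec i x, map_sum]
      have hterm : ∀ j : Fin N, φ (algebraMap K L (x j) • (Pi.single i (KV (Pi.single j 1)) : Fin ℓ → Fin N → L))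
          = Pi.single (σ' i) (fun t => algebraMap K L (x j) * (γf j0 * algebraMap K L (A j t))) := by
        intro j
        rw [LinearMap.map_smul, hformA j, ← Pi.single_smul]
        have hin2 : algebraMap K L (x j) • (fun t => γf j0 * algebraMap K L (A j t))
            = fun t => algebraMap K L (x j) * (γf j0 * algebraMap K L (A j t)) := rfl
        rw [hin2]
      calc ∑ j, φ (algebraMap K L (x j) • (Pi.single i (KV (Pi.single j 1)) : Fin ℓ → Fin N → L))
          = ∑ j, Pi.single (σ' i) (fun t => algebraMap K L (x j) * (γf j0 * algebraMap K L (A j t))) := by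
            exact Finset.sum_congr rfl fun j _ => hterm j
        _ = Pi.single (σ' i) (fun t => γf j0 * algebraMap K L (Matrix.vecMul x A t)) := by
            have hsum_single : ∀ g : Fin N → (Fin N → L),
                ∑ j, (Pi.single (σ' i) (g j) : Fin ℓ → Fin N → L) = Pi.single (σ' i) (∑ j, g j) :=
              fun g => (map_sum (LinearMap.single L (fun _ : Fin ℓ => Fin N → L) (σ' i)) g
                Finset.univ).symm
            rw [hsum_single]
            have hin3 : (∑ j, fun t => algebraMap K L (x j) * (γf j0 * algebraMap K L (A j t)))
                = fun t => γf j0 * algebraMap K L (Matrix.vecMul x A t) := by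
              funext t
              rw [Finset.sum_apply]
              have hvm : Matrix.vecMul x A t = ∑ j, x j * A j t := by
                simp [Matrix.vecMul, dotProduct]
              rw [hvm, _root_.map_sum, Finset.mul_sum]
              refine Finset.sum_congr rfl fun j _ => ?_
              rw [_root_.map_mul]
              ring
            rw [hin3]
    -- invertibility
    have hU : IsUnit A := by
      rw [← Matrix.vecMul_injective_iff_isUnit]
      intro x y hxy
      have hxy' : Matrix.vecMul x A = Matrix.vecMul y A := hxy
      have h0 : Matrix.vecMul (x - y) A = 0 := by
        rw [Matrix.sub_vecMul, hxy', sub_self]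
      have h1 : φ (Pi.single i (KV (x - y))) = 0 := by
        rw [hφKV (x - y), h0]
        simp only [Pi.zero_apply, _root_.map_zero, mul_zero]
        have : (fun _ : Fin N => (0:L)) = (0 : Fin N → L) := rfl
        rw [this, Pi.single_zero]
      have h2 := hker _ h1
      have h3 : KV (x - y) = 0 := by
        have := congr_fun h2 i
        rwa [Pi.single_eq_same] at this
      have h4 : x - y = 0 := by
        by_contra hne
        exact hKV_ne _ hne h3
      exact sub_eq_zero.mp h4
    exact ⟨γf j0, A, hγf j0, hU, hformA⟩
  choose βf Af hβ0 hAU hformf using main2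
  set σe : Equiv.Perm (Fin ℓ) := Equiv.ofBijective σ' hσbij with hσe
  have hsum_single : ∀ (s : Fin ℓ) (g : Fin N → (Fin N → L)),
      ∑ j, (Pi.single s (g j) : Fin ℓ → Fin N → L) = Pi.single s (∑ j, g j) :=
    fun s g => (map_sum (LinearMap.single L (fun _ : Fin ℓ => Fin N → L) s) g Finset.univ).symm
  -- formula for arbitrary single-block vectors
  have hform' : ∀ (i : Fin ℓ) (v : Fin N → L), φ (Pi.single i v)
      = Pi.single (σ' i) ((βf i) • Matrix.vecMul v ((Af i).map (algebraMap K L))) := by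
    intro i v
    have hv : v = ∑ j, v j • KV (Pi.single j 1) := by
      funext t
      simp only [Finset.sum_apply, Pi.smul_apply, smul_eq_mul, hKVdef, Pi.single_apply,
        apply_ite (algebraMap K L), _root_.map_one, _root_.map_zero, mul_ite, mul_one, mul_zero]
      rw [Finset.sum_ite_eq]
      simp
    have hvdec : (Pi.single i v : Fin ℓ → Fin N → L)
        = ∑ j, v j • (Pi.single i (KV (Pi.single j 1)) : Fin ℓ → Fin N → L) := by
      calc (Pi.single i v : Fin ℓ → Fin N → L)
          = Pi.single i (∑ j, v j • KV (Pi.single j 1)) := by rw [← hv]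
        _ = ∑ j, v j • (Pi.single i (KV (Pi.single j 1)) : Fin ℓ → Fin N → L) := by
            rw [show (Pi.single i (∑ j, v j • KV (Pi.single j 1)) : Fin ℓ → Fin N → L)
              = LinearMap.single L (fun _ : Fin ℓ => Fin N → L) i (∑ j, v j • KV (Pi.single j 1))
              from rfl, map_sum]
            refine Finset.sum_congr rfl fun j _ => ?_
            rw [LinearMap.map_smul]
            rfl
    rw [hvdec, map_sum]
    calc ∑ j, φ (v j • (Pi.single i (KV (Pi.single j 1)) : Fin ℓ → Fin N → L))
        = ∑ j, (Pi.single (σ' i) (v j • fun t => βf i * algebraMap K L (Af i j t))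
            : Fin ℓ → Fin N → L) := by
          refine Finset.sum_congr rfl fun j _ => ?_
          rw [LinearMap.map_smul, hformf i j, ← Pi.single_smul]
      _ = Pi.single (σ' i) (∑ j, v j • fun t => βf i * algebraMap K L (Af i j t)) :=
          hsum_single _ _
      _ = Pi.single (σ' i) ((βf i) • Matrix.vecMul v ((Af i).map (algebraMap K L))) := by
          have hin : (∑ j, v j • fun t => βf i * algebraMap K L (Af i j t))
              = (βf i) • Matrix.vecMul v ((Af i).map (algebraMap K L)) := by
            funext t
            rw [Finset.sum_apply]
            have hvm : Matrix.vecMul v ((Af i).map (algebraMap K L)) t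
                = ∑ j, v j * algebraMap K L (Af i j t) := by
              simp [Matrix.vecMul, dotProduct, Matrix.map_apply]
            simp only [Pi.smul_apply, smul_eq_mul]
            rw [hvm, Finset.mul_sum]
            refine Finset.sum_congr rfl fun j _ => ?_
            ring
          rw [hin]
  -- final assembly
  refine ⟨fun k => Units.mk0 (βf (σe.symm k)) (hβ0 (σe.symm k)),
    fun k => Af (σe.symm k), σe.symm, fun k => hAU _, ?_⟩
  intro c k
  have hcdec : c = ∑ i, Pi.single i (c i) := (Finset.univ_sum_single c).symm
  have h5 : φ c = ∑ i, φ (Pi.single i (c i)) := by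
    conv_lhs => rw [hcdec]
    rw [map_sum]
  rw [h5]
  rw [Finset.sum_apply]
  rw [Finset.sum_eq_single (σe.symm k)]
  · rw [hform' (σe.symm k) (c (σe.symm k))]
    have hk : σ' (σe.symm k) = k := σe.apply_symm_apply k
    rw [hk, Pi.single_eq_same]
    rfl
  · intro i _ hi
    rw [hform' i (c i)]
    have hk : k ≠ σ' i := by
      intro h
      apply hi
      have : σe.symm k = σe.symm (σe i) := by rw [h]; rfl
      rw [Equiv.symm_apply_apply] at this
      rw [this]
    rw [Pi.single_eq_of_ne hk]
  · intro h
    exact absurd (Finset.mem_univ _) h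
end hard

/-- characterization of the linear sum-rank isometries of `F_{q^m}^{ℓN}`
with equal sublengths: they are exactly the maps
`(c^(1),…,c^(ℓ)) ↦ (β_1 c^(σ(1)) A_1, …, β_ℓ c^(σ(ℓ)) A_ℓ)` with `β_i ∈ F_{q^m}^*`,
`A_i ∈ F_q^{N×N}` invertible and `σ` a permutation of the shots. -/
theorem linear_sumRank_isometry_iff {K L : Type*} [Field K] [Fintype K] [Field L]
    [Fintype L] [Algebra K L] {m ℓ N : ℕ} (B : Module.Basis (Fin m) K L)
    (φ : (Fin ℓ → Fin N → L) →ₗ[L] (Fin ℓ → Fin N → L)) :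
    (∀ c, srWt B (φ c) = srWt B c) ↔
      ∃ (β : Fin ℓ → Lˣ) (A : Fin ℓ → Matrix (Fin N) (Fin N) K)
        (σ : Equiv.Perm (Fin ℓ)),
        (∀ i, IsUnit (A i)) ∧
        ∀ c i, φ c i = (β i : L) • Matrix.vecMul (c (σ i)) ((A i).map (algebraMap K L)) := by
  constructor
  · intro hφ
    rcases Nat.eq_zero_or_pos N with hN | hN
    · subst hN
      exact ⟨fun _ => 1, fun _ => 1, 1, fun _ => isUnit_one,
        fun c i => funext fun j => j.elim0⟩
    · exact hard_dir B φ hφ hN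
  · rintro ⟨β, A, σ, hA, hform⟩ c
    show ∑ i, rkWt B (φ c i) = ∑ i, rkWt B (c i)
    calc ∑ i, rkWt B (φ c i) = ∑ i, rkWt B (c (σ i)) := by
          refine Finset.sum_congr rfl fun i _ => ?_
          rw [hform c i, rkWt_smul' B _ (Units.ne_zero _), rkWt_vecMul_unit B _ (hA i)]
      _ = ∑ i, rkWt B (c i) := Equiv.sum_comp σ (fun j => rkWt B (c j))
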